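/- Let (f^t, g^t, λ^t) be the iterates of PAM. For every t ≥ 0: (a) F(f^{t+1}, g^t, λ^t) ≥ F(f^t, g^t, λ^t); (b) F(f^{t+1}, g^{t+1}, λ^t) − F(f^{t+1}, g^t, λ^t) = η·KL(b ‖ c^t) ≥ (η/2)‖c^t − b‖_1², where KL denotes the Kullback–Leibler divergence; (c) F(f^{t+1}, g^{t+1}, λ^{t+1}) − F(f^{t+1}, g^{t+1}, λ^t) ≥ (c_∞²/(2η))‖λ^{t+1} − λ^t‖_2². -/

import Mathlib

open scoped BigOperators

noncomputable section

namespace EOT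

/-- Square matrices as functions. -/
abbrev Mat (n : ℕ) := Fin n → Fin n → ℝ

/-- Frobenius inner product ⟨A, B⟩ = Σ_{i,j} A_{ij} B_{ij}. -/
def frob {n : ℕ} (A B : Mat n) : ℝ := ∑ i, ∑ j, A i j * B i j

/-- Row-sum vector r(A) = A 𝟙. -/
def rowSum {n : ℕ} (A : Mat n) : Fin n → ℝ := fun i => ∑ j, A i j

/-- Column-sum vector c(A) = Aᵀ 𝟙. -/
def colSum {n : ℕ} (A : Mat n) : Fin n → ℝ := fun j => ∑ i, A i j

/-- Entrywise ℓ₁ norm of a matrix. -/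
def mnorm1 {n : ℕ} (A : Mat n) : ℝ := ∑ i, ∑ j, |A i j|

/-- ℓ₁ norm of a vector. -/
def vnorm1 {m : ℕ} (v : Fin m → ℝ) : ℝ := ∑ i, |v i|

/-- Euclidean (ℓ₂) norm of a vector. -/
def vnorm2 {m : ℕ} (v : Fin m → ℝ) : ℝ := Real.sqrt (∑ i, v i ^ 2)

/-- c_∞ := max_{k,i,j} |C^k_{ij}|. -/
def cinf {n N : ℕ} (C : Fin N → Mat n) : ℝ := ⨆ k, ⨆ i, ⨆ j, |C k i j|

/-- ι := min_j log b_j. -/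
def iotaMin {n : ℕ} (b : Fin n → ℝ) : ℝ := ⨅ j, Real.log (b j)

/-- ζ^k(f,g,λ)_{ij} = exp((f_i + g_j − λ_k C^k_{ij})/η). -/
def zeta {n N : ℕ} (η : ℝ) (C : Fin N → Mat n) (f g : Fin n → ℝ)
    (lam : Fin N → ℝ) (k : Fin N) : Mat n :=
  fun i j => Real.exp ((f i + g j - lam k * C k i j) / η)

/-- π^k(f,g,λ) = ζ^k(f,g,λ) / Σ_{k'} ‖ζ^{k'}(f,g,λ)‖₁. -/
def piMat {n N : ℕ} (η : ℝ) (C : Fin N → Mat n) (f g : Fin n → ℝ)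
    (lam : Fin N → ℝ) (k : Fin N) : Mat n :=
  fun i j => zeta η C f g lam k i j / ∑ k', mnorm1 (zeta η C f g lam k')

/-- The dual objective F(f,g,λ) = ⟨f,a⟩ + ⟨g,b⟩ − η log(Σ_k ‖ζ^k‖₁) − η. -/
def Fdual {n N : ℕ} (η : ℝ) (C : Fin N → Mat n) (a b : Fin n → ℝ)
    (f g : Fin n → ℝ) (lam : Fin N → ℝ) : ℝ :=
  (∑ i, f i * a i) + (∑ j, g j * b j)
    - η * Real.log (∑ k, mnorm1 (zeta η C f g lam k)) - η

/-- Gradient of F with respect to λ: (∇_λ F)_k = ⟨π^k(f,g,λ), C^k⟩. -/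
def gradLam {n N : ℕ} (η : ℝ) (C : Fin N → Mat n) (f g : Fin n → ℝ)
    (lam : Fin N → ℝ) : Fin N → ℝ :=
  fun k => frob (piMat η C f g lam k) (C k)

/-- `p` is the Euclidean projection of `x` onto the probability simplex. -/
def IsProjSimplex {m : ℕ} (p x : Fin m → ℝ) : Prop :=
  p ∈ stdSimplex ℝ (Fin m) ∧
    ∀ q ∈ stdSimplex ℝ (Fin m),
      vnorm2 (fun k => p k - x k) ≤ vnorm2 (fun k => q k - x k)

/-- Kullback–Leibler divergence KL(v‖w) = Σ_j v_j log(v_j / w_j). -/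
def klVec {m : ℕ} (v w : Fin m → ℝ) : ℝ := ∑ j, v j * Real.log (v j / w j)

/-- The Hamiltonian E(f,g,λ¹,λ²) = F(f,g,λ¹) − (1/(2τ))‖λ¹ − λ²‖₂². -/
def ham {n N : ℕ} (η : ℝ) (C : Fin N → Mat n) (a b : Fin n → ℝ) (τ : ℝ)
    (f g : Fin n → ℝ) (l1 l2 : Fin N → ℝ) : ℝ :=
  Fdual η C a b f g l1 - 1 / (2 * τ) * vnorm2 (fun k => l1 k - l2 k) ^ 2

/-- The rounding procedure Round(A, a, b). -/
def roundMat {n : ℕ} (A : Mat n) (a b : Fin n → ℝ) : Mat n :=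
  let x : Fin n → ℝ := fun i => min (a i / rowSum A i) 1
  let A' : Mat n := fun i j => x i * A i j
  let y : Fin n → ℝ := fun j => min (b j / colSum A' j) 1
  let A'' : Mat n := fun i j => A' i j * y j
  let erra : Fin n → ℝ := fun i => a i - rowSum A'' i
  let errb : Fin n → ℝ := fun j => b j - colSum A'' j
  fun i j => A'' i j + if vnorm1 erra = 0 then 0 else erra i * errb j / vnorm1 erra

/-- The coupling decomposition set Π_{a,b}^N. -/
def coupling {n N : ℕ} (a b : Fin n → ℝ) : Set (Fin N → Mat n) :=
  {P | (∀ k i j, 0 ≤ P k i j) ∧ rowSum (∑ k, P k) = a ∧ colSum (∑ k, P k) = b}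

/-- ℓ(π, λ) = Σ_k λ_k ⟨π^k, C^k⟩. -/
def ell {n N : ℕ} (C : Fin N → Mat n) (P : Fin N → Mat n) (lam : Fin N → ℝ) : ℝ :=
  ∑ k, lam k * frob (P k) (C k)

/-- (P, λ) is an ε-optimal solution of the EOT problem (duality-gap ≤ ε). -/
def epsOptimal {n N : ℕ} (C : Fin N → Mat n) (a b : Fin n → ℝ)
    (P : Fin N → Mat n) (lam : Fin N → ℝ) (ε : ℝ) : Prop :=
  P ∈ coupling (N := N) a b ∧ lam ∈ stdSimplex ℝ (Fin N) ∧
    ∀ μ ∈ stdSimplex ℝ (Fin N), ∀ Q ∈ coupling (N := N) a b,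
      ell C P μ - ell C Q lam ≤ ε

/-- The defining properties of the Margins procedure output (a^k, b^k). -/
def MarginsProp {n N : ℕ} (P : Fin N → Mat n) (b : Fin n → ℝ)
    (ak bk : Fin N → Fin n → ℝ) : Prop :=
  (∀ k, ak k = rowSum (P k)) ∧
  (∀ k j, 0 ≤ bk k j) ∧
  (∀ j, ∑ k, bk k j = b j) ∧
  (∀ k, ∑ j, bk k j = ∑ i, ak k i) ∧
  (∀ j k k', 0 ≤ (bk k j - colSum (P k) j) * (bk k' j - colSum (P k') j))


section helpers

private noncomputable def Fpade : ℝ → ℝ := fun x => (x - 1) * (x + 5) / (4 * x + 2) - Real.log x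

private lemma fpade_hasDeriv {x : ℝ} (hx : 0 < x) :
    HasDerivAt Fpade
      ((((x + 5) + (x - 1)) * (4 * x + 2) - (x - 1) * (x + 5) * 4) / (4 * x + 2) ^ 2 - x⁻¹) x := by
  have hne : (4 * x + 2) ≠ 0 := by nlinarith
  have h1 : HasDerivAt (fun y : ℝ => (y - 1) * (y + 5)) (1 * (x + 5) + (x - 1) * 1) x :=
    (((hasDerivAt_id x).sub_const 1).mul ((hasDerivAt_id x).add_const 5))
  have h2 : HasDerivAt (fun y : ℝ => 4 * y + 2) (4 * 1) x :=
    (((hasDerivAt_id x).const_mul 4).add_const 2)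
  have hdiv := h1.div h2 hne
  have hlog := Real.hasDerivAt_log (ne_of_gt hx)
  have := hdiv.sub hlog
  exact this.congr_deriv (by ring)

private lemma fpade_deriv {x : ℝ} (hx : 0 < x) :
    deriv Fpade x =
      (((x + 5) + (x - 1)) * (4 * x + 2) - (x - 1) * (x + 5) * 4) / (4 * x + 2) ^ 2 - x⁻¹ :=
  (fpade_hasDeriv hx).deriv

private lemma fpade_deriv_nonneg {x : ℝ} (hx : 1 ≤ x) : 0 ≤ deriv Fpade x := by
  have hx0 : (0:ℝ) < x := lt_of_lt_of_le one_pos hx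
  rw [fpade_deriv hx0, sub_nonneg]
  rw [inv_eq_one_div, div_le_div_iff₀ hx0 (by positivity)]
  nlinarith [pow_nonneg (by linarith : (0:ℝ) ≤ x - 1) 3]

private lemma fpade_deriv_nonpos {x : ℝ} (hx0 : 0 < x) (hx : x ≤ 1) : deriv Fpade x ≤ 0 := by
  rw [fpade_deriv hx0, sub_nonpos]
  rw [inv_eq_one_div, div_le_div_iff₀ (by positivity) hx0]
  nlinarith [pow_nonneg (by linarith : (0:ℝ) ≤ 1 - x) 3]

private lemma fpade_diffOn {s : Set ℝ} (hs : ∀ x ∈ s, 0 < x) : DifferentiableOn ℝ Fpade s :=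
  fun x hx => ((fpade_hasDeriv (hs x hx)).differentiableAt).differentiableWithinAt

private lemma fpade_contOn {s : Set ℝ} (hs : ∀ x ∈ s, 0 < x) : ContinuousOn Fpade s :=
  fun x hx => ((fpade_hasDeriv (hs x hx)).differentiableAt).continuousAt.continuousWithinAt

private lemma fpade_one : Fpade 1 = 0 := by simp [Fpade]

lemma log_le_pade {r : ℝ} (hr : 0 < r) :
    Real.log r ≤ (r - 1) * (r + 5) / (4 * r + 2) := by
  have h0 : 0 ≤ Fpade r := by
    rcases le_total 1 r with h | h
    · have hmono : MonotoneOn Fpade (Set.Icc 1 r) := by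
        apply monotoneOn_of_deriv_nonneg (convex_Icc 1 r)
        · exact fpade_contOn (fun x hx => lt_of_lt_of_le one_pos hx.1)
        · exact fpade_diffOn (fun x hx => by
            have := (interior_subset (s := Set.Icc 1 r)) hx
            exact lt_of_lt_of_le one_pos this.1)
        · intro x hx
          rw [interior_Icc] at hx
          exact fpade_deriv_nonneg hx.1.le
      have := hmono (Set.left_mem_Icc.mpr h) (Set.right_mem_Icc.mpr h) h
      rwa [fpade_one] at this
    · have hanti : AntitoneOn Fpade (Set.Icc r 1) := by
        apply antitoneOn_of_deriv_nonpos (convex_Icc r 1)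
        · exact fpade_contOn (fun x hx => lt_of_lt_of_le hr hx.1)
        · exact fpade_diffOn (fun x hx => by
            have := (interior_subset (s := Set.Icc r 1)) hx
            exact lt_of_lt_of_le hr this.1)
        · intro x hx
          rw [interior_Icc] at hx
          exact fpade_deriv_nonpos (lt_trans hr hx.1) hx.2.le
      have := hanti (Set.left_mem_Icc.mpr h) (Set.right_mem_Icc.mpr h) h
      rwa [fpade_one] at this
  simpa [Fpade, sub_nonneg] using h0

end helpers


/-- pointwise: 3(x-y)²/(2(x+2y)) ≤ x log(x/y) - x + y for x,y>0 -/
lemma kl_pointwise {x y : ℝ} (hx : 0 < x) (hy : 0 < y) :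
    3 * (x - y) ^ 2 / (2 * (x + 2 * y)) ≤ x * Real.log (x / y) - x + y := by
  have hr : 0 < y / x := div_pos hy hx
  have h := log_le_pade hr
  have hlog : Real.log (x / y) = - Real.log (y / x) := by
    rw [← Real.log_inv]; congr 1; field_simp
  have hb : x * Real.log (y / x) ≤ x * ((y / x - 1) * (y / x + 5) / (4 * (y / x) + 2)) :=
    mul_le_mul_of_nonneg_left h hx.le
  have heq : -(x * ((y / x - 1) * (y / x + 5) / (4 * (y / x) + 2))) - x + y
      = 3 * (x - y) ^ 2 / (2 * (x + 2 * y)) := by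
    field_simp
    ring
  rw [hlog]
  linarith [hb, heq]

/-- Pinsker-type inequality for positive probability vectors. -/
lemma pinsker_vec {n : ℕ} (u v : Fin n → ℝ) (hu : ∀ j, 0 < u j) (hv : ∀ j, 0 < v j)
    (hu1 : ∑ j, u j = 1) (hv1 : ∑ j, v j = 1) :
    (∑ j, |v j - u j|) ^ 2 ≤ 2 * ∑ j, u j * Real.log (u j / v j) := by
  set T : ℝ := ∑ j, (u j - v j) ^ 2 / (u j + 2 * v j) with hT
  have hTklen : 3 / 2 * T ≤ ∑ j, u j * Real.log (u j / v j) := by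
    have h1 : ∀ j : Fin n, 3 * (u j - v j) ^ 2 / (2 * (u j + 2 * v j))
        ≤ u j * Real.log (u j / v j) - u j + v j := fun j => kl_pointwise (hu j) (hv j)
    have h2 : 3 / 2 * T ≤ ∑ j, (u j * Real.log (u j / v j) - u j + v j) := by
      rw [hT, Finset.mul_sum]
      apply Finset.sum_le_sum
      intro j _
      have := h1 j
      have hpos : 0 < u j + 2 * v j := by nlinarith [hu j, hv j]
      calc 3 / 2 * ((u j - v j) ^ 2 / (u j + 2 * v j))
          = 3 * (u j - v j) ^ 2 / (2 * (u j + 2 * v j)) := by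
            rw [div_mul_eq_mul_div, mul_div_assoc, div_div]
            ring_nf
        _ ≤ _ := this
    calc 3 / 2 * T ≤ ∑ j, (u j * Real.log (u j / v j) - u j + v j) := h2
      _ = (∑ j, u j * Real.log (u j / v j)) - (∑ j, u j) + ∑ j, v j := by
          rw [Finset.sum_add_distrib, Finset.sum_sub_distrib]
      _ = ∑ j, u j * Real.log (u j / v j) := by rw [hu1, hv1]; ring
  have hCS : (∑ j, |v j - u j|) ^ 2 ≤ T * 3 := by
    have := Finset.sum_mul_sq_le_sq_mul_sq Finset.univ
      (fun j => |v j - u j| / Real.sqrt (u j + 2 * v j))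
      (fun j => Real.sqrt (u j + 2 * v j))
    have hrw : ∀ j : Fin n, |v j - u j| / Real.sqrt (u j + 2 * v j) * Real.sqrt (u j + 2 * v j)
        = |v j - u j| := by
      intro j
      have hpos : (0:ℝ) < u j + 2 * v j := by nlinarith [hu j, hv j]
      rw [div_mul_cancel₀]
      exact (Real.sqrt_pos.mpr hpos).ne'
    simp only [hrw] at this
    have hf2 : ∀ j : Fin n, (|v j - u j| / Real.sqrt (u j + 2 * v j)) ^ 2
        = (u j - v j) ^ 2 / (u j + 2 * v j) := by
      intro j
      have hpos : (0:ℝ) ≤ u j + 2 * v j := by nlinarith [hu j, hv j]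
      rw [div_pow, sq_abs, Real.sq_sqrt hpos]
      rw [show (v j - u j) ^ 2 = (u j - v j) ^ 2 by ring]
    have hg2 : ∀ j : Fin n, (Real.sqrt (u j + 2 * v j)) ^ 2 = u j + 2 * v j := by
      intro j
      exact Real.sq_sqrt (by nlinarith [hu j, hv j])
    simp only [hf2, hg2] at this
    have hsum3 : ∑ j, (u j + 2 * v j) = 3 := by
      rw [Finset.sum_add_distrib, hu1, ← Finset.mul_sum, hv1]
      norm_num
    rw [hsum3] at this
    exact this
  nlinarith [hTklen, hCS]



lemma lse_smooth {M : Type*} [Fintype M] [Nonempty M] (α β : M → ℝ) (K : ℝ)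
    (hK : ∀ m, β m ^ 2 ≤ K) :
    Real.log (∑ m, Real.exp (α m + β m)) ≤
      Real.log (∑ m, Real.exp (α m))
        + (∑ m, β m * Real.exp (α m)) / (∑ m, Real.exp (α m)) + K / 2 := by
  set D : ℝ → ℝ := fun s => ∑ m, Real.exp (α m + s * β m) with hDdef
  set Nf : ℝ → ℝ := fun s => ∑ m, β m * Real.exp (α m + s * β m) with hNdef
  set Q : ℝ → ℝ := fun s => ∑ m, β m ^ 2 * Real.exp (α m + s * β m) with hQdef
  have hDpos : ∀ s, 0 < D s := fun s =>
    Finset.sum_pos (fun m _ => Real.exp_pos _) Finset.univ_nonempty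
  have hterm : ∀ (m : M) (s : ℝ), HasDerivAt (fun s => Real.exp (α m + s * β m))
      (β m * Real.exp (α m + s * β m)) s := by
    intro m s
    have h1 : HasDerivAt (fun s : ℝ => α m + s * β m) (β m) s := by
      simpa using (hasDerivAt_mul_const (β m)).const_add (α m)
    simpa [mul_comm] using h1.exp
  have hD : ∀ s, HasDerivAt D (Nf s) s := by
    intro s
    exact HasDerivAt.fun_sum (fun m _ => hterm m s)
  have hN : ∀ s, HasDerivAt Nf (Q s) s := by
    intro s
    have : ∀ m ∈ Finset.univ (α := M), HasDerivAt (fun s => β m * Real.exp (α m + s * β m))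
        (β m ^ 2 * Real.exp (α m + s * β m)) s := by
      intro m _
      have := (hterm m s).const_mul (β m)
      exact this.congr_deriv (by ring)
    exact HasDerivAt.fun_sum this
  set ρ' : ℝ → ℝ := fun s => Nf s / D s - Nf 0 / D 0 - K * s with hρ'def
  set ρ : ℝ → ℝ := fun s => Real.log (D s) - Real.log (D 0) - s * (Nf 0 / D 0) - K / 2 * s ^ 2
    with hρdef
  have hρ'deriv : ∀ s, HasDerivAt ρ' ((Q s * D s - Nf s * Nf s) / D s ^ 2 - K) s := by
    intro s
    have hq := (hN s).div (hD s) (hDpos s).ne'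
    have hlin : HasDerivAt (fun s : ℝ => K * s) K s := by
      simpa using (hasDerivAt_id s).const_mul K
    exact (hq.sub_const (Nf 0 / D 0)).sub hlin
  have hρderiv : ∀ s, HasDerivAt ρ (ρ' s) s := by
    intro s
    have hlog := (hD s).log (hDpos s).ne'
    have hlin : HasDerivAt (fun s : ℝ => s * (Nf 0 / D 0)) (Nf 0 / D 0) s := by
      simpa using hasDerivAt_mul_const (Nf 0 / D 0)
    have hsq : HasDerivAt (fun s : ℝ => K / 2 * s ^ 2) (K / 2 * (2 * s)) s := by
      have := (hasDerivAt_pow 2 s).const_mul (K / 2)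
      simpa using this
    have h := ((hlog.sub_const (Real.log (D 0))).sub hlin).sub hsq
    exact h.congr_deriv (by simp only [hρ'def]; ring)
  have hρ''le : ∀ s, (Q s * D s - Nf s * Nf s) / D s ^ 2 - K ≤ 0 := by
    intro s
    have hQle : Q s ≤ K * D s := by
      rw [hQdef, hDdef, Finset.mul_sum]
      exact Finset.sum_le_sum fun m _ =>
        mul_le_mul_of_nonneg_right (hK m) (Real.exp_pos _).le
    have hD2 : (0:ℝ) < D s ^ 2 := by positivity
    rw [sub_nonpos, div_le_iff₀ hD2]
    nlinarith [sq_nonneg (Nf s), (hDpos s), hQle]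
  have hρ'anti : Antitone ρ' := by
    apply antitone_of_deriv_nonpos
    · exact fun s => (hρ'deriv s).differentiableAt
    · intro s
      rw [(hρ'deriv s).deriv]
      exact hρ''le s
  have hρ'0 : ρ' 0 = 0 := by simp [hρ'def]
  have hρanti : AntitoneOn ρ (Set.Icc 0 1) := by
    apply antitoneOn_of_deriv_nonpos (convex_Icc 0 1)
    · exact fun s _ => (hρderiv s).differentiableAt.continuousAt.continuousWithinAt
    · exact fun s _ => ((hρderiv s).differentiableAt).differentiableWithinAt
    · intro s hs
      rw [interior_Icc] at hs
      rw [(hρderiv s).deriv]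
      calc ρ' s ≤ ρ' 0 := hρ'anti hs.1.le
        _ = 0 := hρ'0
  have h01 := hρanti (Set.left_mem_Icc.mpr zero_le_one) (Set.right_mem_Icc.mpr zero_le_one)
    zero_le_one
  have hρ0 : ρ 0 = 0 := by simp [hρdef]
  rw [hρ0] at h01
  have hρ1 : ρ 1 = Real.log (D 1) - Real.log (D 0) - Nf 0 / D 0 - K / 2 := by
    simp [hρdef]
  have hD1 : D 1 = ∑ m, Real.exp (α m + β m) := by simp [hDdef]
  have hD0 : D 0 = ∑ m, Real.exp (α m) := by simp [hDdef]
  have hN0 : Nf 0 = ∑ m, β m * Real.exp (α m) := by simp [hNdef]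
  rw [hρ1, hD1, hD0, hN0] at h01
  linarith



lemma proj_var_ineq {m : ℕ} {p x q : Fin m → ℝ}
    (hp : p ∈ stdSimplex ℝ (Fin m))
    (hmin : ∀ q ∈ stdSimplex ℝ (Fin m),
      vnorm2 (fun k => p k - x k) ≤ vnorm2 (fun k => q k - x k))
    (hq : q ∈ stdSimplex ℝ (Fin m)) :
    ∑ k, (x k - p k) * (q k - p k) ≤ 0 := by
  set c : ℝ := ∑ k, (p k - x k) * (q k - p k) with hc
  set s : ℝ := ∑ k, (q k - p k) ^ 2 with hs
  have hs0 : 0 ≤ s := Finset.sum_nonneg fun k _ => sq_nonneg _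
  have key : ∀ θ : ℝ, 0 < θ → θ ≤ 1 → 0 ≤ 2 * c + θ * s := by
    intro θ hθ0 hθ1
    set z : Fin m → ℝ := (1 - θ) • p + θ • q with hz
    have hzmem : z ∈ stdSimplex ℝ (Fin m) :=
      (convex_stdSimplex ℝ (Fin m)) hp hq (by linarith) hθ0.le (by ring)
    have h := hmin z hzmem
    have hsq : ∑ k, (p k - x k) ^ 2 ≤ ∑ k, (z k - x k) ^ 2 := by
      have := (Real.sqrt_le_sqrt_iff (Finset.sum_nonneg fun k _ => sq_nonneg _)).mp h
      exact this
    have hexp : ∑ k, (z k - x k) ^ 2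
        = (∑ k, (p k - x k) ^ 2) + 2 * θ * c + θ ^ 2 * s := by
      have hzk : ∀ k, z k = p k + θ * (q k - p k) := by
        intro k; simp [hz]; ring
      rw [hc, hs, Finset.mul_sum, Finset.mul_sum, ← Finset.sum_add_distrib,
        ← Finset.sum_add_distrib]
      apply Finset.sum_congr rfl
      intro k _
      rw [hzk k]
      ring
    rw [hexp] at hsq
    have h1 : 0 ≤ 2 * θ * c + θ ^ 2 * s := by linarith
    have h2 : 0 ≤ θ * (2 * c + θ * s) := by nlinarith
    nlinarith [mul_pos hθ0 hθ0]
  have hc0 : 0 ≤ c := by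
    by_contra hneg
    push_neg at hneg
    rcases eq_or_lt_of_le hs0 with hs0' | hspos
    · have := key 1 one_pos le_rfl
      rw [← hs0'] at this
      linarith
    · set θ := min 1 (-c / s) with hθ
      have hθ0 : 0 < θ := lt_min one_pos (div_pos (by linarith) hspos)
      have hθ1 : θ ≤ 1 := min_le_left _ _
      have := key θ hθ0 hθ1
      have hθs : θ * s ≤ -c := by
        have : θ ≤ -c / s := min_le_right _ _
        calc θ * s ≤ (-c / s) * s := mul_le_mul_of_nonneg_right this hs0
          _ = -c := by field_simp
      linarith
  have : ∑ k, (x k - p k) * (q k - p k) = -c := by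
    rw [hc, ← Finset.sum_neg_distrib]
    apply Finset.sum_congr rfl
    intro k _
    ring
  rw [this]
  linarith
/-! ### Auxiliary lemmas -/

section Aux

private lemma zeta_pos' {n N : ℕ} (η : ℝ) (C : Fin N → Mat n) (f g : Fin n → ℝ)
    (lam : Fin N → ℝ) (k : Fin N) (i j : Fin n) : 0 < zeta η C f g lam k i j :=
  Real.exp_pos _

private lemma mnorm1_zeta {n N : ℕ} (η : ℝ) (C : Fin N → Mat n) (f g : Fin n → ℝ)
    (lam : Fin N → ℝ) (k : Fin N) :
    mnorm1 (zeta η C f g lam k) = ∑ i, ∑ j, zeta η C f g lam k i j := by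
  unfold mnorm1
  exact Finset.sum_congr rfl fun i _ => Finset.sum_congr rfl fun j _ =>
    abs_of_pos (zeta_pos' η C f g lam k i j)

/-- total mass S as a triple sum -/
private lemma Ssum_eq {n N : ℕ} (η : ℝ) (C : Fin N → Mat n) (f g : Fin n → ℝ)
    (lam : Fin N → ℝ) :
    ∑ k, mnorm1 (zeta η C f g lam k) = ∑ k, ∑ i, ∑ j, zeta η C f g lam k i j :=
  Finset.sum_congr rfl fun k _ => mnorm1_zeta η C f g lam k

private lemma Ssum_pos {n N : ℕ} (hn : 0 < n) (hN : 0 < N) (η : ℝ) (C : Fin N → Mat n)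
    (f g : Fin n → ℝ) (lam : Fin N → ℝ) :
    0 < ∑ k, mnorm1 (zeta η C f g lam k) := by
  rw [Ssum_eq]
  have : Nonempty (Fin n) := Fin.pos_iff_nonempty.mp hn
  have : Nonempty (Fin N) := Fin.pos_iff_nonempty.mp hN
  refine Finset.sum_pos (fun k _ => ?_) Finset.univ_nonempty
  refine Finset.sum_pos (fun i _ => ?_) Finset.univ_nonempty
  exact Finset.sum_pos (fun j _ => Real.exp_pos _) Finset.univ_nonempty

private lemma rowSum_zeta {n N : ℕ} (η : ℝ) (C : Fin N → Mat n) (f g : Fin n → ℝ)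
    (lam : Fin N → ℝ) (i : Fin n) :
    rowSum (∑ k, zeta η C f g lam k) i = ∑ j, ∑ k, zeta η C f g lam k i j := by
  unfold rowSum
  apply Finset.sum_congr rfl
  intro j _
  simp [Finset.sum_apply]

private lemma colSum_zeta {n N : ℕ} (η : ℝ) (C : Fin N → Mat n) (f g : Fin n → ℝ)
    (lam : Fin N → ℝ) (j : Fin n) :
    colSum (∑ k, zeta η C f g lam k) j = ∑ i, ∑ k, zeta η C f g lam k i j := by
  unfold colSum
  apply Finset.sum_congr rfl
  intro i _
  simp [Finset.sum_apply]

end Aux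
section RowStep

private lemma row_step_le {n N : ℕ} (hn : 0 < n) (hN : 0 < N)
    (C : Fin N → Mat n) (a b : Fin n → ℝ)
    (ha1 : ∑ i, a i = 1) (ha' : ∀ i, 0 < a i)
    (η : ℝ) (hη : 0 < η) (f g : Fin n → ℝ) (lam : Fin N → ℝ) :
    Fdual η C a b f g lam ≤
      Fdual η C a b
        (fun i => f i + η * Real.log (a i / rowSum (∑ k, zeta η C f g lam k) i)) g lam := by
  have hnn : Nonempty (Fin n) := Fin.pos_iff_nonempty.mp hn
  have hNN : Nonempty (Fin N) := Fin.pos_iff_nonempty.mp hN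
  set r : Fin n → ℝ := fun i => rowSum (∑ k, zeta η C f g lam k) i with hr
  have hrpos : ∀ i, 0 < r i := by
    intro i
    rw [hr]
    simp only [rowSum_zeta]
    refine Finset.sum_pos (fun j _ => ?_) Finset.univ_nonempty
    exact Finset.sum_pos (fun k _ => Real.exp_pos _) Finset.univ_nonempty
  set f' : Fin n → ℝ := fun i => f i + η * Real.log (a i / r i) with hf'
  set S : ℝ := ∑ k, mnorm1 (zeta η C f g lam k) with hS
  have hSpos : 0 < S := Ssum_pos hn hN η C f g lam
  have hSr : S = ∑ i, r i := by
    rw [hS, Ssum_eq]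
    rw [Finset.sum_comm]
    apply Finset.sum_congr rfl
    intro i _
    rw [hr]
    simp only [rowSum_zeta]
    exact Finset.sum_comm
  -- new zeta
  have hzeta' : ∀ k i j, zeta η C f' g lam k i j = (a i / r i) * zeta η C f g lam k i j := by
    intro k i j
    unfold zeta
    rw [hf']
    have harg : (f i + η * Real.log (a i / r i) + g j - lam k * C k i j) / η
        = Real.log (a i / r i) + (f i + g j - lam k * C k i j) / η := by
      field_simp
      ring
    rw [harg, Real.exp_add, Real.exp_log (div_pos (ha' i) (hrpos i))]
  have hS' : ∑ k, mnorm1 (zeta η C f' g lam k) = 1 := by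
    rw [Ssum_eq]
    have : ∀ k : Fin N, ∑ i, ∑ j, zeta η C f' g lam k i j
        = ∑ i, (a i / r i) * ∑ j, zeta η C f g lam k i j := by
      intro k
      apply Finset.sum_congr rfl
      intro i _
      rw [Finset.mul_sum]
      exact Finset.sum_congr rfl fun j _ => hzeta' k i j
    rw [Finset.sum_congr rfl fun k _ => this k]
    rw [Finset.sum_comm]
    have : ∀ i : Fin n, ∑ k, (a i / r i) * ∑ j, zeta η C f g lam k i j = a i := by
      intro i
      rw [← Finset.mul_sum]
      have hri : r i = ∑ k, ∑ j, zeta η C f g lam k i j := by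
        rw [hr]; simp only [rowSum_zeta]; exact Finset.sum_comm
      rw [← hri, div_mul_cancel₀ _ (hrpos i).ne']
    rw [Finset.sum_congr rfl fun i _ => this i, ha1]
  -- key inequality
  have hkey : 0 ≤ ∑ i, Real.log (a i / r i) * a i + Real.log S := by
    have hterm : ∀ i : Fin n, a i - r i / S ≤ Real.log (a i / r i) * a i + Real.log S * a i := by
      intro i
      have hx : 0 < r i / (a i * S) := div_pos (hrpos i) (mul_pos (ha' i) hSpos)
      have hlog := Real.log_le_sub_one_of_pos hx
      have hinv : Real.log (r i / (a i * S)) = -(Real.log (a i / r i) + Real.log S) := by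
        rw [show r i / (a i * S) = ((a i / r i) * S)⁻¹ by
          field_simp]
        rw [Real.log_inv, Real.log_mul (div_pos (ha' i) (hrpos i)).ne' hSpos.ne']
      rw [hinv] at hlog
      have h2 : 1 - r i / (a i * S) ≤ Real.log (a i / r i) + Real.log S := by linarith
      have h3 := mul_le_mul_of_nonneg_right h2 (ha' i).le
      calc a i - r i / S = (1 - r i / (a i * S)) * a i := by
            field_simp [(ha' i).ne', hSpos.ne', (hrpos i).ne']
          _ ≤ (Real.log (a i / r i) + Real.log S) * a i := h3
          _ = Real.log (a i / r i) * a i + Real.log S * a i := by ring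
    have hsum := Finset.sum_le_sum fun i (_ : i ∈ Finset.univ) => hterm i
    have hL : ∑ i, (a i - r i / S) = 0 := by
      rw [Finset.sum_sub_distrib, ha1]
      have : ∑ i, r i / S = (∑ i, r i) / S := by rw [Finset.sum_div]
      rw [this, ← hSr, div_self hSpos.ne']
      ring
    have hR : ∑ i, (Real.log (a i / r i) * a i + Real.log S * a i)
        = (∑ i, Real.log (a i / r i) * a i) + Real.log S := by
      rw [Finset.sum_add_distrib, ← Finset.mul_sum, ha1, mul_one]
    rw [hL, hR] at hsum
    exact hsum
  -- assemble
  unfold Fdual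
  rw [hS', Real.log_one, ← hS]
  have hfa : ∑ i, f' i * a i = (∑ i, f i * a i) + η * ∑ i, Real.log (a i / r i) * a i := by
    rw [hf', Finset.mul_sum, ← Finset.sum_add_distrib]
    apply Finset.sum_congr rfl
    intro i _
    ring
  rw [hfa]
  nlinarith [hkey, hη]

end RowStep
section ColStep

private lemma colSum_piMat {n N : ℕ} (η : ℝ) (C : Fin N → Mat n) (f g : Fin n → ℝ)
    (lam : Fin N → ℝ) (j : Fin n) :
    colSum (∑ k, piMat η C f g lam k) j
      = colSum (∑ k, zeta η C f g lam k) j / ∑ k, mnorm1 (zeta η C f g lam k) := by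
  unfold colSum piMat
  rw [Finset.sum_div]
  apply Finset.sum_congr rfl
  intro i _
  simp only [Finset.sum_apply]
  rw [Finset.sum_div]

private lemma col_step_eq {n N : ℕ} (hn : 0 < n) (hN : 0 < N)
    (C : Fin N → Mat n) (a b : Fin n → ℝ)
    (hb1 : ∑ j, b j = 1) (hb' : ∀ j, 0 < b j)
    (η : ℝ) (hη : 0 < η) (f g : Fin n → ℝ) (lam : Fin N → ℝ) :
    Fdual η C a b f
        (fun j => g j + η * Real.log (b j / colSum (∑ k, zeta η C f g lam k) j)) lam
      - Fdual η C a b f g lam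
      = η * klVec b (colSum (∑ k, piMat η C f g lam k)) := by
  have hnn : Nonempty (Fin n) := Fin.pos_iff_nonempty.mp hn
  have hNN : Nonempty (Fin N) := Fin.pos_iff_nonempty.mp hN
  set c : Fin n → ℝ := fun j => colSum (∑ k, zeta η C f g lam k) j with hcv
  have hcpos : ∀ j, 0 < c j := by
    intro j
    rw [hcv]
    simp only [colSum_zeta]
    refine Finset.sum_pos (fun i _ => ?_) Finset.univ_nonempty
    exact Finset.sum_pos (fun k _ => Real.exp_pos _) Finset.univ_nonempty
  set g' : Fin n → ℝ := fun j => g j + η * Real.log (b j / c j) with hg'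
  set S : ℝ := ∑ k, mnorm1 (zeta η C f g lam k) with hS
  have hSpos : 0 < S := Ssum_pos hn hN η C f g lam
  have hSc : S = ∑ j, c j := by
    calc S = ∑ k, ∑ i, ∑ j, zeta η C f g lam k i j := by rw [hS, Ssum_eq]
      _ = ∑ i, ∑ k, ∑ j, zeta η C f g lam k i j := Finset.sum_comm
      _ = ∑ i, ∑ j, ∑ k, zeta η C f g lam k i j :=
          Finset.sum_congr rfl fun i _ => Finset.sum_comm
      _ = ∑ j, ∑ i, ∑ k, zeta η C f g lam k i j := Finset.sum_comm
      _ = ∑ j, c j := Finset.sum_congr rfl fun j _ => by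
          rw [hcv]; simp only [colSum_zeta]
  have hzeta' : ∀ k i j, zeta η C f g' lam k i j = (b j / c j) * zeta η C f g lam k i j := by
    intro k i j
    unfold zeta
    rw [hg']
    have harg : (f i + (g j + η * Real.log (b j / c j)) - lam k * C k i j) / η
        = Real.log (b j / c j) + (f i + g j - lam k * C k i j) / η := by
      field_simp
      ring
    rw [harg, Real.exp_add, Real.exp_log (div_pos (hb' j) (hcpos j))]
  have hS' : ∑ k, mnorm1 (zeta η C f g' lam k) = 1 := by
    rw [Ssum_eq]
    have h1 : ∀ k : Fin N, ∑ i, ∑ j, zeta η C f g' lam k i j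
        = ∑ j, ∑ i, (b j / c j) * zeta η C f g lam k i j := by
      intro k
      rw [Finset.sum_comm]
      exact Finset.sum_congr rfl fun j _ => Finset.sum_congr rfl fun i _ => hzeta' k i j
    rw [Finset.sum_congr rfl fun k _ => h1 k, Finset.sum_comm]
    have h2 : ∀ j : Fin n, ∑ k, ∑ i, (b j / c j) * zeta η C f g lam k i j = b j := by
      intro j
      have : ∑ k, ∑ i, (b j / c j) * zeta η C f g lam k i j
          = (b j / c j) * ∑ k, ∑ i, zeta η C f g lam k i j := by
        rw [Finset.mul_sum]
        exact Finset.sum_congr rfl fun k _ => (Finset.mul_sum _ _ _).symm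
      rw [this]
      have hcj : c j = ∑ k, ∑ i, zeta η C f g lam k i j := by
        rw [hcv]; simp only [colSum_zeta]; exact Finset.sum_comm
      rw [← hcj, div_mul_cancel₀ _ (hcpos j).ne']
    rw [Finset.sum_congr rfl fun j _ => h2 j, hb1]
  -- kl rewrite
  have hklVec : klVec b (colSum (∑ k, piMat η C f g lam k))
      = (∑ j, b j * Real.log (b j / c j)) + Real.log S := by
    unfold klVec
    have hct : ∀ j : Fin n, colSum (∑ k, piMat η C f g lam k) j = c j / S := fun j =>
      colSum_piMat η C f g lam j
    have : ∀ j : Fin n, b j * Real.log (b j / (c j / S))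
        = b j * Real.log (b j / c j) + Real.log S * b j := by
      intro j
      have : b j / (c j / S) = (b j / c j) * S := by
        field_simp
      rw [this, Real.log_mul (div_pos (hb' j) (hcpos j)).ne' hSpos.ne']
      ring
    rw [Finset.sum_congr rfl fun j _ => by rw [hct j, this j]]
    rw [Finset.sum_add_distrib, ← Finset.mul_sum, hb1, mul_one]
  rw [hklVec]
  unfold Fdual
  rw [hS', Real.log_one, ← hS]
  have hgb : ∑ j, g' j * b j
      = (∑ j, g j * b j) + η * ∑ j, b j * Real.log (b j / c j) := by
    rw [hg', Finset.mul_sum, ← Finset.sum_add_distrib]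
    apply Finset.sum_congr rfl
    intro j _
    ring
  rw [hgb]
  ring

end ColStep
section LamStep

private lemma abs_C_le_cinf {n N : ℕ} (C : Fin N → Mat n) (k : Fin N) (i j : Fin n) :
    |C k i j| ≤ cinf C := by
  unfold cinf
  have h1 : |C k i j| ≤ ⨆ j', |C k i j'| :=
    le_ciSup (f := fun j' => |C k i j'|) (Set.Finite.bddAbove (Set.finite_range _)) j
  have h2 : (⨆ j', |C k i j'|) ≤ ⨆ i', ⨆ j', |C k i' j'| :=
    le_ciSup (f := fun i' => ⨆ j', |C k i' j'|) (Set.Finite.bddAbove (Set.finite_range _)) i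
  have h3 : (⨆ i', ⨆ j', |C k i' j'|) ≤ ⨆ k', ⨆ i', ⨆ j', |C k' i' j'| :=
    le_ciSup (f := fun k' => ⨆ i', ⨆ j', |C k' i' j'|) (Set.Finite.bddAbove (Set.finite_range _)) k
  linarith

private lemma lam_step {n N : ℕ} (hn : 0 < n) (hN : 0 < N) (C : Fin N → Mat n)
    (a b : Fin n → ℝ) (η : ℝ) (hη : 0 < η) (hc : 0 < cinf C) (τ : ℝ)
    (hτ : τ = η / cinf C ^ 2)
    (f g : Fin n → ℝ) (l1 l2 : Fin N → ℝ) (hl1 : l1 ∈ stdSimplex ℝ (Fin N))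
    (hproj : IsProjSimplex l2 (fun k => l1 k + τ * gradLam η C f g l1 k)) :
    cinf C ^ 2 / (2 * η) * vnorm2 (fun k => l2 k - l1 k) ^ 2
      ≤ Fdual η C a b f g l2 - Fdual η C a b f g l1 := by
  have hnn : Nonempty (Fin n) := Fin.pos_iff_nonempty.mp hn
  have hNN : Nonempty (Fin N) := Fin.pos_iff_nonempty.mp hN
  set δ : Fin N → ℝ := fun k => l2 k - l1 k with hδ
  set D2 : ℝ := ∑ k, δ k ^ 2 with hD2
  have hD2nonneg : 0 ≤ D2 := Finset.sum_nonneg fun k _ => sq_nonneg _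
  have hvn2 : vnorm2 (fun k => l2 k - l1 k) ^ 2 = D2 := by
    unfold vnorm2
    rw [Real.sq_sqrt (Finset.sum_nonneg fun k _ => sq_nonneg _)]
  have hτpos : 0 < τ := by rw [hτ]; positivity
  -- Step 1: projection inequality
  have hgradlow : D2 ≤ τ * ∑ k, gradLam η C f g l1 k * δ k := by
    have hvi := proj_var_ineq hproj.1 hproj.2 hl1
    have hrw : ∀ k : Fin N, ((fun k => l1 k + τ * gradLam η C f g l1 k) k - l2 k)
        * (l1 k - l2 k) = δ k ^ 2 - τ * (gradLam η C f g l1 k * δ k) := by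
      intro k
      simp only [hδ]
      ring
    rw [Finset.sum_congr rfl fun k _ => hrw k, Finset.sum_sub_distrib] at hvi
    rw [← Finset.mul_sum] at hvi
    rw [hD2]
    linarith
  -- Step 2: smoothness via lse_smooth
  set M := Fin N × Fin n × Fin n
  set α : M → ℝ := fun m => (f m.2.1 + g m.2.2 - l1 m.1 * C m.1 m.2.1 m.2.2) / η with hα
  set β : M → ℝ := fun m => -(δ m.1 * C m.1 m.2.1 m.2.2) / η with hβ
  set K : ℝ := cinf C ^ 2 * D2 / η ^ 2 with hK
  have hKb : ∀ m : M, β m ^ 2 ≤ K := by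
    intro m
    rw [hβ, hK]
    have h1 : (δ m.1) ^ 2 ≤ D2 := by
      rw [hD2]
      exact Finset.single_le_sum (f := fun k => δ k ^ 2) (fun k _ => sq_nonneg _)
        (Finset.mem_univ m.1)
    have h2 : (C m.1 m.2.1 m.2.2) ^ 2 ≤ cinf C ^ 2 := by
      have := abs_C_le_cinf C m.1 m.2.1 m.2.2
      nlinarith [abs_nonneg (C m.1 m.2.1 m.2.2), sq_abs (C m.1 m.2.1 m.2.2)]
    have hβ2 : (-(δ m.1 * C m.1 m.2.1 m.2.2) / η) ^ 2
        = δ m.1 ^ 2 * C m.1 m.2.1 m.2.2 ^ 2 / η ^ 2 := by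
      rw [div_pow, neg_pow]
      ring_nf
    rw [hβ2]
    have hnum : δ m.1 ^ 2 * C m.1 m.2.1 m.2.2 ^ 2 ≤ cinf C ^ 2 * D2 := by
      nlinarith [mul_le_mul h1 h2 (sq_nonneg (C m.1 m.2.1 m.2.2)) hD2nonneg]
    rw [div_le_div_iff₀ (by positivity) (by positivity)]
    nlinarith [mul_le_mul_of_nonneg_right hnum (sq_nonneg η)]
  have hlse := lse_smooth α β K hKb
  -- identify sums
  have hA : ∑ k, mnorm1 (zeta η C f g l1 k) = ∑ m : M, Real.exp (α m) := by
    rw [Ssum_eq]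
    rw [Fintype.sum_prod_type]
    apply Finset.sum_congr rfl
    intro k _
    rw [Fintype.sum_prod_type]
    rfl
  have hB : ∑ k, mnorm1 (zeta η C f g l2 k) = ∑ m : M, Real.exp (α m + β m) := by
    rw [Ssum_eq]
    rw [Fintype.sum_prod_type]
    apply Finset.sum_congr rfl
    intro k _
    rw [Fintype.sum_prod_type]
    apply Finset.sum_congr rfl
    intro i _
    apply Finset.sum_congr rfl
    intro j _
    unfold zeta
    congr 1
    simp only [hα, hβ, hδ]
    field_simp
    ring
  have hSpos : 0 < ∑ m : M, Real.exp (α m) := by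
    rw [← hA]; exact Ssum_pos hn hN η C f g l1
  -- gradient identification
  have hgradid : ∑ m : M, β m * Real.exp (α m)
      = -(1 / η) * ((∑ m : M, Real.exp (α m)) * ∑ k, gradLam η C f g l1 k * δ k) := by
    have hgk : ∀ k : Fin N, gradLam η C f g l1 k
        = (∑ i, ∑ j, zeta η C f g l1 k i j * C k i j) / ∑ m : M, Real.exp (α m) := by
      intro k
      unfold gradLam frob piMat
      rw [← hA, Finset.sum_div]
      apply Finset.sum_congr rfl
      intro i _
      rw [Finset.sum_div]
      apply Finset.sum_congr rfl
      intro j _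
      rw [div_mul_eq_mul_div]
    have hl : ∑ m : M, β m * Real.exp (α m)
        = ∑ k, ∑ i, ∑ j, -(1 / η) * (δ k * (zeta η C f g l1 k i j * C k i j)) := by
      rw [Fintype.sum_prod_type]
      refine Finset.sum_congr rfl fun k _ => ?_
      rw [Fintype.sum_prod_type]
      refine Finset.sum_congr rfl fun i _ => Finset.sum_congr rfl fun j _ => ?_
      show β (k, i, j) * Real.exp (α (k, i, j)) = _
      simp only [hβ]
      have hz : Real.exp (α (k, i, j)) = zeta η C f g l1 k i j := rfl
      rw [hz]
      ring
    rw [hl]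
    rw [show -(1 / η) * ((∑ m : M, Real.exp (α m)) * ∑ k, gradLam η C f g l1 k * δ k)
        = ∑ k, -(1 / η) * ((∑ m : M, Real.exp (α m)) * (gradLam η C f g l1 k * δ k)) by
      rw [Finset.mul_sum, Finset.mul_sum]]
    refine Finset.sum_congr rfl fun k _ => ?_
    rw [hgk k]
    have hX : (∑ m : M, Real.exp (α m))
        * ((∑ i, ∑ j, zeta η C f g l1 k i j * C k i j) / (∑ m : M, Real.exp (α m)) * δ k)
        = δ k * ∑ i, ∑ j, zeta η C f g l1 k i j * C k i j := by
      field_simp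
    rw [hX]
    simp only [Finset.mul_sum]
  -- assemble
  have hdiff : Fdual η C a b f g l2 - Fdual η C a b f g l1
      = -η * (Real.log (∑ m : M, Real.exp (α m + β m))
          - Real.log (∑ m : M, Real.exp (α m))) := by
    unfold Fdual
    rw [hA, hB]
    ring
  set G : ℝ := ∑ k, gradLam η C f g l1 k * δ k with hG
  set S : ℝ := ∑ m : M, Real.exp (α m) with hSd
  have hglue : (∑ m : M, β m * Real.exp (α m)) / S = -(1 / η) * G := by
    rw [hgradid, mul_div_assoc, mul_div_cancel_left₀ _ hSpos.ne']
  have hlse2 : Real.log (∑ m : M, Real.exp (α m + β m)) - Real.log S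
      ≤ -(1 / η) * G + K / 2 := by
    rw [← hglue]
    linarith [hlse]
  have hfinal : -η * (-(1 / η) * G + K / 2)
      ≤ -η * (Real.log (∑ m : M, Real.exp (α m + β m)) - Real.log S) := by
    have := mul_le_mul_of_nonpos_left hlse2 (by linarith : -η ≤ 0)
    linarith
  have hexp : -η * (-(1 / η) * G + K / 2) = G - η * K / 2 := by
    field_simp
    ring
  rw [hdiff, hvn2]
  rw [hexp] at hfinal
  have hKval : η * K / 2 = cinf C ^ 2 * D2 / (2 * η) := by
    rw [hK]
    field_simp
  have hstep1 : cinf C ^ 2 * D2 / η ≤ G := by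
    have h1 : D2 / τ ≤ G := by
      rw [div_le_iff₀ hτpos]
      rw [hG]
      linarith [hgradlow]
    have h2 : D2 / τ = cinf C ^ 2 * D2 / η := by
      rw [hτ]
      field_simp
    linarith [h2 ▸ h1]
  have hhalf : cinf C ^ 2 * D2 / η - cinf C ^ 2 * D2 / (2 * η)
      = cinf C ^ 2 / (2 * η) * D2 := by
    field_simp
    ring
  linarith [hfinal, hKval, hstep1, hhalf]

end LamStep
section Pinsker

private lemma sum_colSum_zeta {n N : ℕ} (η : ℝ) (C : Fin N → Mat n) (f g : Fin n → ℝ)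
    (lam : Fin N → ℝ) :
    ∑ j, colSum (∑ k, zeta η C f g lam k) j = ∑ k, mnorm1 (zeta η C f g lam k) := by
  rw [Ssum_eq]
  calc ∑ j, colSum (∑ k, zeta η C f g lam k) j
      = ∑ j, ∑ i, ∑ k, zeta η C f g lam k i j :=
        Finset.sum_congr rfl fun j _ => by simp only [colSum_zeta]
    _ = ∑ i, ∑ j, ∑ k, zeta η C f g lam k i j := Finset.sum_comm
    _ = ∑ i, ∑ k, ∑ j, zeta η C f g lam k i j :=
        Finset.sum_congr rfl fun i _ => Finset.sum_comm
    _ = ∑ k, ∑ i, ∑ j, zeta η C f g lam k i j := Finset.sum_comm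

private lemma col_pinsker {n N : ℕ} (hn : 0 < n) (hN : 0 < N) (C : Fin N → Mat n)
    (b : Fin n → ℝ) (hb1 : ∑ j, b j = 1) (hb' : ∀ j, 0 < b j)
    (η : ℝ) (hη : 0 < η) (f g : Fin n → ℝ) (lam : Fin N → ℝ) :
    η / 2 * vnorm1 (fun j => colSum (∑ k, piMat η C f g lam k) j - b j) ^ 2
      ≤ η * klVec b (colSum (∑ k, piMat η C f g lam k)) := by
  have hnn : Nonempty (Fin n) := Fin.pos_iff_nonempty.mp hn
  have hNN : Nonempty (Fin N) := Fin.pos_iff_nonempty.mp hN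
  set v : Fin n → ℝ := fun j => colSum (∑ k, piMat η C f g lam k) j with hv
  have hSpos : 0 < ∑ k, mnorm1 (zeta η C f g lam k) := Ssum_pos hn hN η C f g lam
  have hcpos : ∀ j, 0 < colSum (∑ k, zeta η C f g lam k) j := by
    intro j
    simp only [colSum_zeta]
    refine Finset.sum_pos (fun i _ => ?_) Finset.univ_nonempty
    exact Finset.sum_pos (fun k _ => Real.exp_pos _) Finset.univ_nonempty
  have hvpos : ∀ j, 0 < v j := by
    intro j
    rw [hv]
    simp only [colSum_piMat]
    exact div_pos (hcpos j) hSpos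
  have hv1 : ∑ j, v j = 1 := by
    rw [hv]
    simp only [colSum_piMat]
    rw [← Finset.sum_div, sum_colSum_zeta, div_self hSpos.ne']
  have key := pinsker_vec b v hb' hvpos hb1 hv1
  have hkl : klVec b (colSum (∑ k, piMat η C f g lam k))
      = ∑ j, b j * Real.log (b j / v j) := rfl
  have hvn : vnorm1 (fun j => colSum (∑ k, piMat η C f g lam k) j - b j)
      = ∑ j, |v j - b j| := rfl
  rw [hkl, hvn]
  nlinarith [key, hη.le, sq_nonneg (∑ j, |v j - b j|)]

end Pinsker
/-- monotone increase of F along the PAM iterates. -/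
theorem pam_sufficient_increase
    {n N : ℕ} (hn : 0 < n) (hN : 0 < N)
    (C : Fin N → Mat n) (a b : Fin n → ℝ)
    (ha : a ∈ stdSimplex ℝ (Fin n)) (hb : b ∈ stdSimplex ℝ (Fin n))
    (ha' : ∀ i, 0 < a i) (hb' : ∀ j, 0 < b j)
    (η : ℝ) (hη : 0 < η) (hc : 0 < cinf C)
    (τ : ℝ) (hτ : τ = η / cinf C ^ 2)
    (f g : ℕ → Fin n → ℝ) (lam : ℕ → Fin N → ℝ)
    (hf0 : f 0 = fun _ => 1) (hg0 : g 0 = fun _ => 1)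
    (hlam0 : lam 0 = fun _ => (N : ℝ)⁻¹)
    (hfstep : ∀ t, f (t + 1) = fun i =>
      f t i + η * Real.log (a i / rowSum (∑ k, zeta η C (f t) (g t) (lam t) k) i))
    (hgstep : ∀ t, g (t + 1) = fun j =>
      g t j + η * Real.log (b j / colSum (∑ k, zeta η C (f (t + 1)) (g t) (lam t) k) j))
    (hlamstep : ∀ t, IsProjSimplex (lam (t + 1))
      (fun k => lam t k + τ * gradLam η C (f (t + 1)) (g (t + 1)) (lam t) k))
    (ct : ℕ → Fin n → ℝ)
    (hct : ∀ t, ct t = colSum (∑ k, piMat η C (f (t + 1)) (g t) (lam t) k)) :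
    ∀ t : ℕ,
      (Fdual η C a b (f t) (g t) (lam t) ≤ Fdual η C a b (f (t + 1)) (g t) (lam t)) ∧
      (Fdual η C a b (f (t + 1)) (g (t + 1)) (lam t)
          - Fdual η C a b (f (t + 1)) (g t) (lam t) = η * klVec b (ct t) ∧
        η / 2 * vnorm1 (fun j => ct t j - b j) ^ 2 ≤ η * klVec b (ct t)) ∧
      (cinf C ^ 2 / (2 * η) * vnorm2 (fun k => lam (t + 1) k - lam t k) ^ 2
        ≤ Fdual η C a b (f (t + 1)) (g (t + 1)) (lam (t + 1))
          - Fdual η C a b (f (t + 1)) (g (t + 1)) (lam t)) := by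
  have hsim : ∀ t, lam t ∈ stdSimplex ℝ (Fin N) := by
    intro t
    induction t with
    | zero =>
        rw [hlam0]
        refine ⟨fun k => by positivity, ?_⟩
        have hNne : (N : ℝ) ≠ 0 := Nat.cast_ne_zero.mpr hN.ne'
        simp only [Finset.sum_const, Finset.card_univ, Fintype.card_fin, nsmul_eq_mul]
        field_simp
    | succ t _ => exact (hlamstep t).1
  intro t
  refine ⟨?_, ⟨?_, ?_⟩, ?_⟩
  · rw [hfstep t]
    exact row_step_le hn hN C a b ha.2 ha' η hη (f t) (g t) (lam t)
  · rw [hgstep t, hct t]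
    exact col_step_eq hn hN C a b hb.2 hb' η hη (f (t + 1)) (g t) (lam t)
  · rw [hct t]
    exact col_pinsker hn hN C b hb.2 hb' η hη (f (t + 1)) (g t) (lam t)
  · exact lam_step hn hN C a b η hη hc τ hτ (f (t + 1)) (g (t + 1)) (lam t) (lam (t + 1))
      (hsim t) (hlamstep t)

end EOT

end
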